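/- arXiv:math/0610625 — 4 statements merged into one kernel-verified Lean document; each statement's English description precedes it below -/
import Mathlib

section
/- For t > 0, the partial derivative ∂Ψ_ε(t)/∂ε evaluated at ε = 0 equals ψ(t) := e^{-t}/√(πt) + 2Φ(√(2t)), where 1 - Ψ_ε(t) = Φ(-√(2t) - ε/√(2t)) + e^{-2ε} Φ(√(2t) - ε/√(2t)) and Φ is the standard normal CDF. -/
open MeasureTheory Real

/-- The standard normal cumulative distribution function. -/
noncomputable def Phi (x : ℝ) : ℝ := ∫ y in Set.Iic x, Real.exp (-y ^ 2 / 2) / Real.sqrt (2 * Real.pi)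

/-- `Psi ε t` is the probability that a pair of left-right coalescing Brownian motions
started at distance `ε` apart has not met by time `t`. -/
noncomputable def Psi (ε t : ℝ) : ℝ :=
  1 - Phi (-Real.sqrt (2 * t) - ε / Real.sqrt (2 * t))
    - Real.exp (-2 * ε) * Phi (Real.sqrt (2 * t) - ε / Real.sqrt (2 * t))

/-- `psi t` is the density of the branching-coalescing point set of the Brownian net. -/
noncomputable def psi (t : ℝ) : ℝ :=
  Real.exp (-t) / Real.sqrt (Real.pi * t) + 2 * Phi (Real.sqrt (2 * t))

lemma gauss_integrable : Integrable (fun y : ℝ => Real.exp (-y ^ 2 / 2) / Real.sqrt (2 * Real.pi)) := by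
  have h : Integrable (fun y : ℝ => Real.exp (-(1/2 : ℝ) * y ^ 2)) :=
    integrable_exp_neg_mul_sq (by norm_num)
  have := h.div_const (Real.sqrt (2 * Real.pi))
  convert this using 2 with y
  ring_nf

lemma hasDerivAt_Phi (x : ℝ) :
    HasDerivAt Phi (Real.exp (-x ^ 2 / 2) / Real.sqrt (2 * Real.pi)) x := by
  set f : ℝ → ℝ := fun y => Real.exp (-y ^ 2 / 2) / Real.sqrt (2 * Real.pi)
  have hcont : Continuous f := by
    apply Continuous.div_const
    exact (Real.continuous_exp.comp (by continuity))
  have hF : ∀ u : ℝ, Phi u = Phi 0 + ∫ y in (0:ℝ)..u, f y := by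
    intro u
    have := intervalIntegral.integral_Iic_sub_Iic
      (gauss_integrable.integrableOn (s := Set.Iic 0))
      (gauss_integrable.integrableOn (s := Set.Iic u)) (μ := volume)
    simp only [Phi, f] at this ⊢
    linarith [this]
  have hd : HasDerivAt (fun u => Phi 0 + ∫ y in (0:ℝ)..u, f y) (f x) x :=
    ((hcont.integral_hasStrictDerivAt 0 x).hasDerivAt).const_add _
  exact (hd.congr_of_eventuallyEq (Filter.Eventually.of_forall fun u => (hF u))).congr_deriv rfl

/-- The partial derivative of `Psi ε t` in `ε` at `ε = 0` equals `psi t`. -/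
theorem hasDerivAt_Psi_zero : ∀ t : ℝ, 0 < t →
    HasDerivAt (fun ε : ℝ => Psi ε t) (psi t) 0 := by
  intro t ht
  set c : ℝ := Real.sqrt (2 * t) with hc
  have hcpos : 0 < c := Real.sqrt_pos.2 (by linarith)
  have hc2 : c ^ 2 = 2 * t := Real.sq_sqrt (by linarith)
  set N : ℝ := Real.exp (-t) / Real.sqrt (2 * Real.pi) with hN
  -- derivative of inner affine maps
  have h1 : HasDerivAt (fun ε : ℝ => -c - ε / c) (-(1/c)) 0 := by
    simpa using ((hasDerivAt_id (0:ℝ)).div_const c).const_sub (-c)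
  have h2 : HasDerivAt (fun ε : ℝ => c - ε / c) (-(1/c)) 0 := by
    simpa using ((hasDerivAt_id (0:ℝ)).div_const c).const_sub c
  have hsq1 : (-c - 0 / c) ^ 2 = 2 * t := by rw [zero_div, sub_zero, neg_sq, hc2]
  have hsq2 : (c - 0 / c) ^ 2 = 2 * t := by rw [zero_div, sub_zero, hc2]
  have hP1 : HasDerivAt (fun ε : ℝ => Phi (-c - ε / c)) (N * (-(1/c))) 0 := by
    have h := (hasDerivAt_Phi (-c - 0 / c)).comp 0 h1
    have e : Real.exp (-(-c - 0 / c) ^ 2 / 2) / Real.sqrt (2 * Real.pi) * (-(1/c))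
        = N * (-(1/c)) := by
      rw [hsq1, hN, show -(2*t)/2 = -t by ring]
    rw [e] at h; exact h
  have hP2 : HasDerivAt (fun ε : ℝ => Phi (c - ε / c)) (N * (-(1/c))) 0 := by
    have h := (hasDerivAt_Phi (c - 0 / c)).comp 0 h2
    have e : Real.exp (-(c - 0 / c) ^ 2 / 2) / Real.sqrt (2 * Real.pi) * (-(1/c))
        = N * (-(1/c)) := by
      rw [hsq2, hN, show -(2*t)/2 = -t by ring]
    rw [e] at h; exact h
  have hE : HasDerivAt (fun ε : ℝ => Real.exp (-2 * ε)) (-2) 0 := by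
    have : HasDerivAt (fun ε : ℝ => -2 * ε) (-2) 0 := by
      simpa using (hasDerivAt_id (0:ℝ)).const_mul (-2)
    simpa using this.exp
  have hprod : HasDerivAt (fun ε : ℝ => Real.exp (-2 * ε) * Phi (c - ε / c))
      ((-2) * Phi c + 1 * (N * (-(1/c)))) 0 := by
    have := hE.fun_mul hP2
    simpa using this
  have hfull : HasDerivAt (fun ε : ℝ => Psi ε t)
      (-(N * (-(1/c))) - ((-2) * Phi c + 1 * (N * (-(1/c))))) 0 := by
    have := ((hP1.const_sub 1).fun_sub hprod)
    simpa [Psi, hc] using this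
  convert hfull using 1
  -- psi t = N/c + 2 Phi c + N/c
  have hs : Real.sqrt (2 * Real.pi) * Real.sqrt (2 * t) = 2 * Real.sqrt (Real.pi * t) := by
    rw [← Real.sqrt_mul (by positivity),
      show (2:ℝ) * Real.pi * (2 * t) = 2 ^ 2 * (Real.pi * t) by ring,
      Real.sqrt_mul (by norm_num : (0:ℝ) ≤ 2 ^ 2), Real.sqrt_sq (by norm_num : (0:ℝ) ≤ 2)]
  have hpt : Real.sqrt (Real.pi * t) ≠ 0 := by positivity
  have hkey : Real.exp (-t) / Real.sqrt (Real.pi * t) = 2 * (N / c) := by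
    rw [hN, hc, div_div, hs]
    field_simp
  simp only [psi, hkey]
  ring
end

section
/- For fixed t > 0, define Ψ_ε(t) = 1 - Φ(-√(2t) - ε/√(2t)) - e^{-2ε} Φ(√(2t) - ε/√(2t)) for ε ≥ 0, where Φ is the standard normal CDF. Then ε ↦ Ψ_ε(t) is nondecreasing in ε. -/
open MeasureTheory Real

namespace PsiAux

noncomputable def f (y : ℝ) : ℝ := Real.exp (-y ^ 2 / 2) / Real.sqrt (2 * Real.pi)

lemma f_nonneg (y : ℝ) : 0 ≤ f y := div_nonneg (Real.exp_pos _).le (Real.sqrt_nonneg _)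

lemma f_cont : Continuous f := by
  unfold f
  continuity

lemma f_int : Integrable f := by
  have h : Integrable fun x : ℝ => Real.exp (-(1/2 : ℝ) * x ^ 2) :=
    integrable_exp_neg_mul_sq (by norm_num)
  have h2 := h.div_const (Real.sqrt (2 * Real.pi))
  have : f = fun x : ℝ => Real.exp (-(1/2 : ℝ) * x ^ 2) / Real.sqrt (2 * Real.pi) := by
    funext y
    unfold f
    ring_nf
  rw [this]
  exact h2

lemma Phi_eq (u : ℝ) : Phi u = Phi 0 + ∫ y in (0:ℝ)..u, f y := by
  have := intervalIntegral.integral_Iic_sub_Iic (μ := volume) (f := f) f_int.integrableOn f_int.integrableOn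
    (a := 0) (b := u)
  unfold Phi
  unfold f at this ⊢
  linarith [this]

lemma Phi_hasDerivAt (x : ℝ) : HasDerivAt Phi (f x) x := by
  have hd : HasDerivAt (fun u => ∫ y in (0:ℝ)..u, f y) (f x) x :=
    intervalIntegral.integral_hasDerivAt_right (f_int.intervalIntegrable)
      (f_cont.stronglyMeasurableAtFilter _ _) f_cont.continuousAt
  have h2 : HasDerivAt (fun u => Phi 0 + ∫ y in (0:ℝ)..u, f y) (f x) x := hd.const_add _
  have : Phi = fun u => Phi 0 + ∫ y in (0:ℝ)..u, f y := funext Phi_eq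
  rw [this]
  exact h2

lemma Phi_nonneg (x : ℝ) : 0 ≤ Phi x :=
  setIntegral_nonneg measurableSet_Iic fun y _ =>
    div_nonneg (Real.exp_pos _).le (Real.sqrt_nonneg _)

end PsiAux

open PsiAux in
/-- For fixed `t > 0`, the non-collision probability `ε ↦ Psi ε t` is nondecreasing in `ε ≥ 0`. -/
theorem Psi_monotone_in_eps : ∀ t : ℝ, 0 < t →
    MonotoneOn (fun ε : ℝ => Psi ε t) (Set.Ici 0) := by
  intro t ht
  set s : ℝ := Real.sqrt (2 * t) with hs_def
  have hs : 0 < s := Real.sqrt_pos.2 (by linarith)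
  have hD : ∀ ε : ℝ, HasDerivAt (fun ε => Psi ε t)
      (f (-s - ε / s) / s + 2 * Real.exp (-2 * ε) * Phi (s - ε / s)
        + Real.exp (-2 * ε) * f (s - ε / s) / s) ε := by
    intro ε
    have h1 : HasDerivAt (fun ε : ℝ => -s - ε / s) (-(1 / s)) ε :=
      ((hasDerivAt_id ε).div_const s).const_sub (-s)
    have h2 : HasDerivAt (fun ε : ℝ => s - ε / s) (-(1 / s)) ε :=
      ((hasDerivAt_id ε).div_const s).const_sub s
    have hP1 : HasDerivAt (fun ε : ℝ => Phi (-s - ε / s)) (f (-s - ε / s) * -(1 / s)) ε :=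
      (Phi_hasDerivAt _).comp ε h1
    have hP2 : HasDerivAt (fun ε : ℝ => Phi (s - ε / s)) (f (s - ε / s) * -(1 / s)) ε :=
      (Phi_hasDerivAt _).comp ε h2
    have hE : HasDerivAt (fun ε : ℝ => Real.exp (-2 * ε)) (Real.exp (-2 * ε) * (-2 * 1)) ε :=
      ((hasDerivAt_id ε).const_mul (-2)).exp
    have hraw : HasDerivAt (fun ε => Psi ε t)
        (0 - f (-s - ε / s) * -(1 / s)
          - (Real.exp (-2 * ε) * (-2 * 1) * Phi (s - ε / s)
            + Real.exp (-2 * ε) * (f (s - ε / s) * -(1 / s)))) ε := by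
      unfold Psi
      rw [← hs_def]
      exact ((hasDerivAt_const ε (1:ℝ)).sub hP1).sub (hE.mul hP2)
    convert hraw using 1
    field_simp
    ring
  apply monotoneOn_of_deriv_nonneg (convex_Ici 0)
  · exact fun x _ => ((hD x).differentiableAt.continuousAt.continuousWithinAt)
  · intro x _
    exact (hD x).differentiableAt.differentiableWithinAt
  · intro x hx
    rw [(hD x).deriv]
    have h0 : (0:ℝ) ≤ f (-s - x / s) / s := div_nonneg (f_nonneg _) hs.le
    have h1 : (0:ℝ) ≤ 2 * Real.exp (-2 * x) * Phi (s - x / s) :=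
      mul_nonneg (by positivity) (Phi_nonneg _)
    have h2 : (0:ℝ) ≤ Real.exp (-2 * x) * f (s - x / s) / s :=
      div_nonneg (mul_nonneg (Real.exp_pos _).le (f_nonneg _)) hs.le
    linarith
end

section
/- For fixed ε ≥ 0, the function t ↦ Ψ_ε(t) := 1 - Φ(-√(2t) - ε/√(2t)) - e^{-2ε} Φ(√(2t) - ε/√(2t)) is nonincreasing on (0, ∞), where Φ is the standard normal CDF. -/
open MeasureTheory Real

noncomputable def gauss (x : ℝ) : ℝ := Real.exp (-x ^ 2 / 2) / Real.sqrt (2 * Real.pi)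

lemma gauss_nonneg (x : ℝ) : 0 ≤ gauss x :=
  div_nonneg (Real.exp_pos _).le (Real.sqrt_nonneg _)

lemma gauss_continuous : Continuous gauss := by
  unfold gauss
  fun_prop

lemma gauss_integrable_s4 : Integrable gauss := by
  have h : Integrable (fun x : ℝ => Real.exp (-(1/2 : ℝ) * x ^ 2)) :=
    integrable_exp_neg_mul_sq (by norm_num)
  have h2 := h.div_const (Real.sqrt (2 * Real.pi))
  convert h2 using 2 with x
  unfold gauss
  ring_nf

lemma Phi_eq (y : ℝ) : Phi y = Phi 0 + ∫ u in (0:ℝ)..y, gauss u := by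
  have h := intervalIntegral.integral_Iic_sub_Iic (μ := volume) (f := gauss)
    (gauss_integrable_s4.integrableOn) (gauss_integrable_s4.integrableOn) (a := 0) (b := y)
  have hy : Phi y = ∫ u in Set.Iic y, gauss u := rfl
  have h0 : Phi 0 = ∫ u in Set.Iic (0:ℝ), gauss u := rfl
  rw [hy, h0]
  linarith [h]

lemma Phi_hasDerivAt (x : ℝ) : HasDerivAt Phi (gauss x) x := by
  have hfun : Phi = fun y => Phi 0 + ∫ u in (0:ℝ)..y, gauss u := funext Phi_eq
  rw [hfun]
  exact (intervalIntegral.integral_hasDerivAt_right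
    (gauss_integrable_s4.intervalIntegrable)
    (gauss_continuous.stronglyMeasurableAtFilter _ _)
    gauss_continuous.continuousAt).const_add (Phi 0)

/-- For fixed `ε ≥ 0`, the survival probability `t ↦ Psi ε t` is nonincreasing on `(0, ∞)`. -/
theorem Psi_antitone_in_t : ∀ ε : ℝ, 0 ≤ ε →
    AntitoneOn (fun t : ℝ => Psi ε t) (Set.Ioi 0) := by
  intro ε hε
  have hderiv : ∀ t ∈ Set.Ioi (0:ℝ), HasDerivAt (fun t : ℝ => Psi ε t)
      (-(gauss (-Real.sqrt (2 * t) - ε / Real.sqrt (2 * t)) *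
          (2 * ε / Real.sqrt (2 * t) ^ 3))) t := by
    intro t ht
    have ht' : (0:ℝ) < t := ht
    have h2t : (0:ℝ) < 2 * t := by linarith
    set s := Real.sqrt (2 * t) with hs_def
    have hs : 0 < s := Real.sqrt_pos.mpr h2t
    have hs2 : s ^ 2 = 2 * t := Real.sq_sqrt h2t.le
    -- derivative of s(t) = √(2t)
    have h2 : HasDerivAt (fun t : ℝ => 2 * t) 2 t := by
      simpa using (hasDerivAt_id t).const_mul 2
    have hsd : HasDerivAt (fun t : ℝ => Real.sqrt (2 * t)) (1 / s) t := by
      have := h2.sqrt (by positivity)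
      convert this using 1
      rw [← hs_def]
      field_simp
    -- derivative of ε / s(t)
    have hed : HasDerivAt (fun t : ℝ => ε / Real.sqrt (2 * t)) (-(ε / s ^ 3)) t := by
      have : HasDerivAt (fun t : ℝ => ε / Real.sqrt (2 * t))
          ((0 * Real.sqrt (2 * t) - ε * (1 / s)) / Real.sqrt (2 * t) ^ 2) t :=
        (hasDerivAt_const t ε).div hsd (ne_of_gt hs)
      convert this using 1
      rw [← hs_def]
      field_simp
      ring_nf
    -- u and v
    have hu : HasDerivAt (fun t : ℝ => -Real.sqrt (2 * t) - ε / Real.sqrt (2 * t))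
        (-(1 / s) - -(ε / s ^ 3)) t := hsd.neg.sub hed
    have hv : HasDerivAt (fun t : ℝ => Real.sqrt (2 * t) - ε / Real.sqrt (2 * t))
        (1 / s - -(ε / s ^ 3)) t := hsd.sub hed
    set u : ℝ := -s - ε / s with hu_def
    set v : ℝ := s - ε / s with hv_def
    have hPu : HasDerivAt (fun t : ℝ => Phi (-Real.sqrt (2 * t) - ε / Real.sqrt (2 * t)))
        (gauss u * (-(1 / s) - -(ε / s ^ 3))) t := (Phi_hasDerivAt _).comp t hu
    have hPv : HasDerivAt (fun t : ℝ => Phi (Real.sqrt (2 * t) - ε / Real.sqrt (2 * t)))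
        (gauss v * (1 / s - -(ε / s ^ 3))) t := (Phi_hasDerivAt _).comp t hv
    have hAll : HasDerivAt (fun t : ℝ => Psi ε t)
        (0 - gauss u * (-(1 / s) - -(ε / s ^ 3))
          - Real.exp (-2 * ε) * (gauss v * (1 / s - -(ε / s ^ 3)))) t := by
      have := ((hasDerivAt_const t (1:ℝ)).sub hPu).sub (hPv.const_mul (Real.exp (-2 * ε)))
      simpa [Psi, Pi.sub_def] using this
    -- key: e^{-2ε} gauss v = gauss u
    have hkey : Real.exp (-2 * ε) * gauss v = gauss u := by
      unfold gauss
      rw [← mul_div_assoc]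
      congr 1
      rw [← Real.exp_add]
      congr 1
      have huv : u ^ 2 = v ^ 2 + 4 * ε := by
        rw [hu_def, hv_def]
        field_simp
        ring
      rw [huv]; ring
    convert hAll using 1
    rw [← mul_assoc, hkey]
    ring
  have hnonpos : ∀ t ∈ Set.Ioi (0:ℝ),
      -(gauss (-Real.sqrt (2 * t) - ε / Real.sqrt (2 * t)) *
          (2 * ε / Real.sqrt (2 * t) ^ 3)) ≤ 0 := by
    intro t ht
    have hs : 0 < Real.sqrt (2 * t) := Real.sqrt_pos.mpr (by simpa using mul_pos two_pos (Set.mem_Ioi.mp ht))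
    have : 0 ≤ gauss (-Real.sqrt (2 * t) - ε / Real.sqrt (2 * t)) *
        (2 * ε / Real.sqrt (2 * t) ^ 3) := mul_nonneg (gauss_nonneg _) (by positivity)
    linarith
  refine antitoneOn_of_deriv_nonpos (convex_Ioi 0) ?_ ?_ ?_
  · exact fun t ht => ((hderiv t ht).continuousAt).continuousWithinAt
  · rw [interior_Ioi]
    exact fun t ht => ((hderiv t ht).differentiableAt).differentiableWithinAt
  · rw [interior_Ioi]
    intro t ht
    rw [(hderiv t ht).deriv]
    exact hnonpos t ht
end

section
/- For t > 0 and ε > 0, ∫_{-ε/√2}^∞ e^{√2 y - t}/√(2πt) · (∫_{ε/√2}^∞ (2(2x+y)/t) e^{-(2x+y)²/(2t)} dx) dy + ∫_{-∞}^{-ε/√2} e^{√2 y - t}/√(2πt) · (∫_{-y}^∞ (2(2x+y)/t) e^{-(2x+y)²/(2t)} dx) dy = Φ(-√(2t) - ε/√(2t)) + e^{-2ε} Φ(√(2t) - ε/√(2t)), where Φ is the standard normal CDF. -/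
open MeasureTheory Real Set Filter Topology

lemma inner_integral (t y a : ℝ) (ht : 0 < t) (ha : 0 ≤ 2*a + y) :
    ∫ x in Set.Ici a, (2*(2*x+y)/t) * Real.exp (-(2*x+y)^2/(2*t))
      = Real.exp (-(2*a+y)^2/(2*t)) := by
  rw [integral_Ici_eq_integral_Ioi]
  have hderiv : ∀ x ∈ Set.Ici a, HasDerivAt (fun x => -Real.exp (-(2*x+y)^2/(2*t)))
      ((2*(2*x+y)/t) * Real.exp (-(2*x+y)^2/(2*t))) x := by
    intro x _
    have h1 : HasDerivAt (fun x : ℝ => 2*x+y) 2 x := by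
      simpa using ((hasDerivAt_id x).const_mul 2).add_const y
    have h2 : HasDerivAt (fun x : ℝ => -(2*x+y)^2/(2*t)) (-(2*(2*x+y))*2/(2*t)) x := by
      have := ((h1.pow 2).neg).div_const (2*t)
      simpa [mul_comm, mul_assoc, mul_left_comm] using this
    have h3 := (h2.exp).neg
    exact h3.congr_deriv (by ring)
  have hpos : ∀ x ∈ Set.Ioi a, 0 ≤ (2*(2*x+y)/t) * Real.exp (-(2*x+y)^2/(2*t)) := by
    intro x hx
    have : (0:ℝ) ≤ 2*x + y := by simp only [Set.mem_Ioi] at hx; linarith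
    have h4 : (0:ℝ) ≤ 2*(2*x+y)/t := by positivity
    exact mul_nonneg h4 (Real.exp_nonneg _)
  have htend : Tendsto (fun x => -Real.exp (-(2*x+y)^2/(2*t))) atTop (𝓝 0) := by
    have h1 : Tendsto (fun x : ℝ => 2*x+y) atTop atTop :=
      tendsto_atTop_add_const_right _ y (tendsto_id.const_mul_atTop two_pos)
    have h2 : Tendsto (fun x : ℝ => (2*x+y)^2) atTop atTop := by
      simpa [pow_two] using h1.atTop_mul_atTop₀ h1
    have h3 : Tendsto (fun x : ℝ => (2*x+y)^2/(2*t)) atTop atTop :=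
      h2.atTop_div_const (by positivity)
    have h4 : Tendsto (fun x : ℝ => -(2*x+y)^2/(2*t)) atTop atBot := by
      simp only [neg_div]
      exact tendsto_neg_atBot_iff.mpr h3
    have h5 := (Real.tendsto_exp_atBot.comp h4).neg
    simpa using h5
  have := integral_Ioi_of_hasDerivAt_of_nonneg' hderiv hpos htend
  rw [this]
  simp

lemma gauss_Iic (c μ s : ℝ) (hs : 0 < s) :
    ∫ y in Set.Iic c, Real.exp (-((y - μ)/s)^2 / 2) / Real.sqrt (2*Real.pi)
      = s * Phi ((c - μ)/s) := by
  set g : ℝ → ℝ := fun z => Real.exp (-z^2/2) / Real.sqrt (2*Real.pi) with hg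
  set G : ℝ → ℝ := (Set.Iic ((c-μ)/s)).indicator g with hG
  have h1 : ∫ y in Set.Iic c, Real.exp (-((y - μ)/s)^2 / 2) / Real.sqrt (2*Real.pi)
      = ∫ y : ℝ, G ((y - μ)/s) := by
    rw [← integral_indicator measurableSet_Iic]
    congr 1
    ext y
    by_cases h : y ≤ c
    · rw [Set.indicator_of_mem (Set.mem_Iic.2 h), hG,
        Set.indicator_of_mem (Set.mem_Iic.2 ((div_le_div_iff_of_pos_right hs).mpr (by linarith)))]
    · rw [Set.indicator_of_notMem (by simpa using h), hG,
        Set.indicator_of_notMem (by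
          simp only [Set.mem_Iic, not_le] at h ⊢
          exact (div_lt_div_iff_of_pos_right hs).mpr (by linarith))]
  have h2 : ∫ y : ℝ, G ((y - μ)/s) = ∫ y : ℝ, G (y/s) := by
    have := integral_add_right_eq_self (μ := volume) (fun y : ℝ => G (y/s)) (-μ)
    simpa [sub_eq_add_neg] using this
  have h3 : ∫ y : ℝ, G (y/s) = |s| • ∫ z : ℝ, G z := Measure.integral_comp_div G s
  rw [h1, h2, h3, abs_of_pos hs, smul_eq_mul, hG, integral_indicator measurableSet_Iic]
  rfl

lemma gauss_Ici (c μ s : ℝ) (hs : 0 < s) :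
    ∫ y in Set.Ici c, Real.exp (-((y - μ)/s)^2 / 2) / Real.sqrt (2*Real.pi)
      = s * Phi ((μ - c)/s) := by
  rw [integral_Ici_eq_integral_Ioi]
  have h1 : ∫ y in Set.Ioi c, Real.exp (-((y - μ)/s)^2 / 2) / Real.sqrt (2*Real.pi)
      = ∫ y in Set.Iic (-c), Real.exp (-((y - (-μ))/s)^2 / 2) / Real.sqrt (2*Real.pi) := by
    rw [← integral_comp_neg_Ioi]
    refine setIntegral_congr_fun measurableSet_Ioi fun y _ => ?_
    congr 2
    ring
  rw [h1, gauss_Iic _ _ _ hs]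
  congr 1
  ring

/-- The explicit computation of the probability `P[T_ε < t]` that two left-right Brownian
paths started at distance `ε` apart meet before time `t` (Lemma 6.2 of the paper). -/
theorem meeting_probability_integral : ∀ t ε : ℝ, 0 < t → 0 < ε →
    (∫ y in Set.Ici (-ε / Real.sqrt 2),
        (Real.exp (Real.sqrt 2 * y - t) / Real.sqrt (2 * Real.pi * t)) *
          ∫ x in Set.Ici (ε / Real.sqrt 2),
            (2 * (2 * x + y) / t) * Real.exp (-(2 * x + y) ^ 2 / (2 * t)))
    + (∫ y in Set.Iic (-ε / Real.sqrt 2),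
        (Real.exp (Real.sqrt 2 * y - t) / Real.sqrt (2 * Real.pi * t)) *
          ∫ x in Set.Ici (-y),
            (2 * (2 * x + y) / t) * Real.exp (-(2 * x + y) ^ 2 / (2 * t)))
      = Phi (-Real.sqrt (2 * t) - ε / Real.sqrt (2 * t))
        + Real.exp (-2 * ε) * Phi (Real.sqrt (2 * t) - ε / Real.sqrt (2 * t)) := by
  intro t ε ht hε
  set s2 := Real.sqrt 2 with hs2def
  set st := Real.sqrt t with hstdef
  have hs2 : s2 ^ 2 = 2 := Real.sq_sqrt (by norm_num)
  have hst : st ^ 2 = t := Real.sq_sqrt ht.le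
  have hs2pos : 0 < s2 := Real.sqrt_pos.mpr (by norm_num)
  have hstpos : 0 < st := Real.sqrt_pos.mpr ht
  have hsplit : Real.sqrt (2 * Real.pi * t) = Real.sqrt (2 * Real.pi) * st := by
    rw [hstdef, ← Real.sqrt_mul (by positivity)]
  have h2t : Real.sqrt (2 * t) = s2 * st := by
    rw [hs2def, hstdef, ← Real.sqrt_mul (by norm_num)]
  have hπ : (0:ℝ) < Real.sqrt (2 * Real.pi) := Real.sqrt_pos.mpr (by positivity)
  -- First integral
  have hA : (∫ y in Set.Ici (-ε / s2),
        (Real.exp (s2 * y - t) / Real.sqrt (2 * Real.pi * t)) *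
          ∫ x in Set.Ici (ε / s2),
            (2 * (2 * x + y) / t) * Real.exp (-(2 * x + y) ^ 2 / (2 * t)))
      = Real.exp (-2 * ε) * Phi (Real.sqrt (2 * t) - ε / Real.sqrt (2 * t)) := by
    have step1 : ∀ y ∈ Set.Ici (-ε / s2),
        (Real.exp (s2 * y - t) / Real.sqrt (2 * Real.pi * t)) *
          (∫ x in Set.Ici (ε / s2),
            (2 * (2 * x + y) / t) * Real.exp (-(2 * x + y) ^ 2 / (2 * t)))
        = (Real.exp (-2*ε) / st) * (Real.exp (-((y - s2*(t-ε))/st)^2 / 2) / Real.sqrt (2*Real.pi)) := by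
      intro y hy
      simp only [Set.mem_Ici] at hy
      rw [inner_integral t y (ε / s2) ht (by
        have h0 := div_pos hε hs2pos
        rw [neg_div] at hy
        linarith)]
      rw [hsplit]
      have key : s2 * y - t + (-(2 * (ε / s2) + y) ^ 2 / (2 * t))
          = -2*ε + (-((y - s2*(t-ε))/st)^2 / 2) := by
        have h1 : 2 * (ε / s2) = s2 * ε := by
          field_simp
          linear_combination (-1) * hs2
        rw [h1, div_pow, hst]
        field_simp
        ring_nf
        linear_combination (t^2 - 2*t*ε) * hs2
      rw [div_mul_eq_mul_div, ← Real.exp_add, key, Real.exp_add]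
      field_simp
    rw [setIntegral_congr_fun measurableSet_Ici step1, integral_const_mul,
      gauss_Ici _ _ _ hstpos]
    have harg : (s2*(t-ε) - (-ε / s2))/st = Real.sqrt (2 * t) - ε / Real.sqrt (2 * t) := by
      rw [h2t]
      field_simp
      linear_combination (st*t - st*ε + t - t*st - ε + ε*st - st^2) * hs2 - 2 * hst
    rw [harg]
    field_simp
  -- Second integral
  have hB : (∫ y in Set.Iic (-ε / s2),
        (Real.exp (s2 * y - t) / Real.sqrt (2 * Real.pi * t)) *
          ∫ x in Set.Ici (-y),
            (2 * (2 * x + y) / t) * Real.exp (-(2 * x + y) ^ 2 / (2 * t)))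
      = Phi (-Real.sqrt (2 * t) - ε / Real.sqrt (2 * t)) := by
    have step1 : ∀ y ∈ Set.Iic (-ε / s2),
        (Real.exp (s2 * y - t) / Real.sqrt (2 * Real.pi * t)) *
          (∫ x in Set.Ici (-y),
            (2 * (2 * x + y) / t) * Real.exp (-(2 * x + y) ^ 2 / (2 * t)))
        = (1 / st) * (Real.exp (-((y - s2*t)/st)^2 / 2) / Real.sqrt (2*Real.pi)) := by
      intro y hy
      simp only [Set.mem_Iic] at hy
      have hyneg : y ≤ 0 := le_trans hy (by rw [neg_div]; exact neg_nonpos.mpr (div_pos hε hs2pos).le)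
      rw [inner_integral t y (-y) ht (by linarith)]
      rw [hsplit]
      have key : s2 * y - t + (-(2 * (-y) + y) ^ 2 / (2 * t))
          = -((y - s2*t)/st)^2 / 2 := by
        rw [div_pow, hst]
        field_simp
        ring_nf
        linear_combination (t^2) * hs2
      rw [div_mul_eq_mul_div, ← Real.exp_add, key]
      field_simp
    rw [setIntegral_congr_fun measurableSet_Iic step1, integral_const_mul,
      gauss_Iic _ _ _ hstpos]
    have harg : (-ε / s2 - s2*t)/st = -Real.sqrt (2 * t) - ε / Real.sqrt (2 * t) := by
      rw [h2t]
      field_simp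
      linear_combination (st*t - t - t*st + st^2) * hs2 + 2 * hst
    rw [harg]
    field_simp
  rw [hA, hB, add_comm]
end
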